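/- Let κ be an uncountable cardinal and let G be a simple graph such that for every pair of disjoint sets A, B of vertices of G, each of cardinality strictly less than κ, there exists a vertex x adjacent to every vertex in A and to no vertex in B. Then Aut(G) is not universal: there exists a set S of vertices of G (which can be taken to be a countably infinite clique, so that the automorphism group of the induced subgraph on S is topologically isomorphic to S_∞) such that there is no injective continuous group homomorphism from the automorphism group of the induced subgraph on S into Aut(G). -/

import Mathlib

/-- The topology of pointwise convergence on the permutation group of a set `V`
(regarded as a discrete space): the topology induced from the product topology
on `V → V` where `V` carries the discrete topology. -/
instance permPointwiseTopology (V : Type*) : TopologicalSpace (Equiv.Perm V) :=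
  TopologicalSpace.induced (fun g : Equiv.Perm V => (g : V → V))
    (@Pi.topologicalSpace V (fun _ => V) (fun _ => ⊥))

/-- The automorphism group of a binary relational structure `(V, r)`, realized as the
subgroup of `Equiv.Perm V` of permutations preserving the relation `r` in both directions. -/
def relAut {V : Type*} (r : V → V → Prop) : Subgroup (Equiv.Perm V) where
  carrier := {g : Equiv.Perm V | ∀ x y : V, r (g x) (g y) ↔ r x y}
  one_mem' := fun _ _ => Iff.rfl
  mul_mem' := by
    intro a b ha hb x y
    exact (ha (b x) (b y)).trans (hb x y)
  inv_mem' := by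
    intro a ha x y
    have h := (ha (a⁻¹ x) (a⁻¹ y)).symm
    simpa using h

open Cardinal

theorem perm_open_basis {α : Type*} (U : Set (Equiv.Perm α)) (hU : IsOpen U)
    (h1 : (1 : Equiv.Perm α) ∈ U) :
    ∃ F : Finset α, ∀ g : Equiv.Perm α, (∀ a ∈ F, g a = a) → g ∈ U := by
  letI : TopologicalSpace α := ⊥
  obtain ⟨Ω, hΩo, hΩeq⟩ := isOpen_induced_iff.mp hU
  have hid : (fun a : α => a) ∈ Ω := by
    rw [← hΩeq] at h1
    exact h1
  obtain ⟨I, u, hu, hsub⟩ := isOpen_pi_iff.mp hΩo _ hid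
  refine ⟨I, fun g hg => ?_⟩
  have : ⇑g ∈ Ω := by
    apply hsub
    intro a ha
    rw [hg a ha]
    exact (hu a ha).2
  rw [← hΩeq]
  exact this

theorem key {V : Type u} {α : Type v} [Countable α] [Infinite α]
    (κ : Cardinal.{u}) (hκ : Cardinal.aleph0 < κ) (G : SimpleGraph V)
    (hext : ∀ A B : Set V, Disjoint A B → #A < κ → #B < κ →
      ∃ x : V, (∀ y ∈ A, G.Adj x y) ∧ ∀ y ∈ B, ¬ G.Adj x y)
    (H : Subgroup (Equiv.Perm α)) (hfull : ∀ g : Equiv.Perm α, g ∈ H)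
    (e : H →* relAut G.Adj)
    (einj : Function.Injective e) (econt : Continuous e) : False := by
  classical
  let ev : ↥H → Equiv.Perm V := fun g => ↑(e g)
  have hevmul : ∀ g h : ↥H, ∀ v : V, ev (g * h) v = ev g (ev h v) := by
    intro g h v
    simp [ev, map_mul]
  have hev1 : ∀ v : V, ev 1 v = v := by
    intro v; simp [ev, map_one]
  have hevAdj : ∀ (g : ↥H) (a b : V), G.Adj (ev g a) (ev g b) ↔ G.Adj a b := by
    intro g a b
    exact (e g).2 a b
  -- continuity: each point stabilizer contains a finite-support basic subgroup
  have hfixF : ∀ v : V, ∃ F : Finset α, ∀ g : ↥H,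
      (∀ s ∈ F, (g : Equiv.Perm α) s = s) → ev g v = v := by
    intro v
    letI : TopologicalSpace V := ⊥
    haveI : DiscreteTopology V := discreteTopology_bot V
    have hΦ : Continuous (fun g : ↥H => ev g v) := by
      have h1 : Continuous (fun p : Equiv.Perm V => (p : V → V)) := continuous_induced_dom
      exact ((continuous_apply v).comp h1).comp (continuous_subtype_val.comp econt)
    have hop : IsOpen ((fun g : ↥H => ev g v) ⁻¹' {v}) :=
      (isOpen_discrete ({v} : Set V)).preimage hΦ
    obtain ⟨U₁, hU₁, hpre⟩ := isOpen_induced_iff.mp hop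
    have h1U₁ : (1 : Equiv.Perm α) ∈ U₁ := by
      have hmem1 : (1 : ↥H) ∈ (Subtype.val ⁻¹' U₁ : Set ↥H) := by
        rw [hpre]
        simp only [Set.mem_preimage, Set.mem_singleton_iff]
        exact hev1 v
      exact hmem1
    obtain ⟨F, hF⟩ := perm_open_basis U₁ hU₁ h1U₁
    refine ⟨F, fun g hg => ?_⟩
    have : g ∈ (Subtype.val ⁻¹' U₁ : Set ↥H) := hF g.val hg
    rw [hpre] at this
    simpa using this
  choose Ffix hFfix using hfixF
  -- agreement lemma
  have hagree : ∀ (c : V) (g h : ↥H),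
      (∀ s ∈ Ffix c, (g : Equiv.Perm α) s = (h : Equiv.Perm α) s) → ev g c = ev h c := by
    intro c g h hgh
    have hk : ∀ s ∈ Ffix c, ((g⁻¹ * h : ↥H) : Equiv.Perm α) s = s := by
      intro s hs
      have h1 : ((g⁻¹ * h : ↥H) : Equiv.Perm α) s
          = (g : Equiv.Perm α)⁻¹ ((h : Equiv.Perm α) s) := by
        rw [Subgroup.coe_mul, InvMemClass.coe_inv, Equiv.Perm.mul_apply]
      rw [h1, ← hgh s hs]
      exact Equiv.symm_apply_apply _ _
    have h0 := hFfix c (g⁻¹ * h) hk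
    have h2 : ev g⁻¹ (ev h c) = c := by rw [← hevmul]; exact h0
    have h3 := congrArg (ev g) h2
    rw [← hevmul, mul_inv_cancel] at h3
    rw [hev1] at h3
    exact h3.symm
  -- orbits are countable
  have horb : ∀ c : V, (Set.range fun g : ↥H => ev g c).Countable := by
    intro c
    rw [← Set.countable_coe_iff]
    have hsec0 : ∀ y : ↥(Set.range fun g : ↥H => ev g c), ∃ g : ↥H, ev g c = y :=
      fun y => y.2
    choose sec hsec using hsec0
    have hinj : Function.Injective
        (fun y : ↥(Set.range fun g : ↥H => ev g c) =>
          (fun s : ↥(Ffix c : Set α) => ((sec y : ↥H) : Equiv.Perm α) s.1)) := by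
      intro y y' hyy
      have heq : ev (sec y) c = ev (sec y') c := by
        apply hagree
        intro s hs
        exact congrFun hyy ⟨s, hs⟩
      exact Subtype.ext ((hsec y).symm.trans (heq.trans (hsec y')))
    exact hinj.countable
  -- Claim B: for any finite F ⊆ α and finite U ⊆ V there is g fixing F moving a vertex outside U
  have claimB : ∀ (F : Finset α) (U : Finset V), ∃ g : ↥H, ∃ v : V,
      (∀ s ∈ F, (g : Equiv.Perm α) s = s) ∧ v ∉ U ∧ ev g v ≠ v := by
    intro F U
    by_contra hcon
    push_neg at hcon
    -- hcon : ∀ g v, (fixes F) → v ∉ U → ev g v = v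
    let Ω := {g : ↥H // ∀ s ∈ F, (g : Equiv.Perm α) s = s}
    have hUmem : ∀ (g : Ω) (u : {x // x ∈ U}), ev g.1 u.1 ∈ U := by
      intro g u
      by_contra hw
      have h1 : ev g.1 (ev g.1 u.1) = ev g.1 u.1 := hcon g.1 _ g.2 hw
      have h2 : ev g.1 u.1 = u.1 := (ev g.1).injective h1
      rw [h2] at hw
      exact hw u.2
    let φ : Ω → ({x // x ∈ U} → {x // x ∈ U}) := fun g u => ⟨ev g.1 u.1, hUmem g u⟩
    have hφinj : Function.Injective φ := by
      intro g g' hgg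
      have hperm : ev g.1 = ev g'.1 := by
        apply Equiv.ext
        intro v
        by_cases hv : v ∈ U
        · exact Subtype.ext_iff.mp (congrFun hgg ⟨v, hv⟩)
        · rw [hcon g.1 v g.2 hv, hcon g'.1 v g'.2 hv]
      exact Subtype.ext (einj (Subtype.ext hperm))
    haveI hfin : Finite Ω := Finite.of_injective φ hφinj
    obtain ⟨a₀, ha₀⟩ := Infinite.exists_notMem_finset F
    let ψ : ↥((((insert a₀ F : Finset α) : Set α))ᶜ) → Ω := fun b =>
      ⟨⟨Equiv.swap a₀ b.1, hfull _⟩, by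
        intro s hs
        have hb : b.1 ∉ insert a₀ F := by
          have := b.2
          simpa [Set.mem_compl_iff] using this
        apply Equiv.swap_apply_of_ne_of_ne
        · intro hh; exact ha₀ (hh ▸ hs)
        · intro hh
          exact hb (hh ▸ Finset.mem_insert_of_mem hs)⟩
    have hψinj : Function.Injective ψ := by
      intro b b' hbb
      have h1 : (Equiv.swap a₀ b.1 : Equiv.Perm α) = Equiv.swap a₀ b'.1 := by
        have := congrArg (fun z : Ω => ((z.1 : ↥H) : Equiv.Perm α)) hbb
        exact this
      have h2 := congrArg (fun p : Equiv.Perm α => p a₀) h1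
      exact Subtype.ext (by simpa [Equiv.swap_apply_left] using h2)
    haveI : Infinite ↥((((insert a₀ F : Finset α) : Set α))ᶜ) :=
      Set.infinite_coe_iff.mpr ((insert a₀ F : Finset α).finite_toSet.infinite_compl)
    haveI : Infinite Ω := Infinite.of_injective ψ hψinj
    exact not_finite Ω
  choose gfun vfun hg1 hg2 hg3 using claimB
  -- enumerate all finite subsets of α
  obtain ⟨Fe, hFe⟩ := exists_surjective_nat (Finset α)
  -- recursive construction
  let st : ℕ → Finset V × Finset V := fun n => Nat.rec ((∅ : Finset V), (∅ : Finset V))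
    (fun n p =>
      (insert (vfun (Fe n) p.1) (insert (ev (gfun (Fe n) p.1) (vfun (Fe n) p.1)) p.1),
       if ev (gfun (Fe n) p.1) (vfun (Fe n) p.1) ∈ p.2 then p.2
       else insert (vfun (Fe n) p.1) p.2)) n
  let Un : ℕ → Finset V := fun n => (st n).1
  let Tn : ℕ → Finset V := fun n => (st n).2
  let gn : ℕ → ↥H := fun n => gfun (Fe n) (Un n)
  let vn : ℕ → V := fun n => vfun (Fe n) (Un n)
  let wn : ℕ → V := fun n => ev (gn n) (vn n)
  have hUsucc : ∀ n, Un (n+1) = insert (vn n) (insert (wn n) (Un n)) := fun n => rfl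
  have hTsucc : ∀ n, Tn (n+1) = if wn n ∈ Tn n then Tn n else insert (vn n) (Tn n) :=
    fun n => rfl
  have hfixn : ∀ n, ∀ s ∈ Fe n, ((gn n : ↥H) : Equiv.Perm α) s = s := fun n => hg1 (Fe n) (Un n)
  have hvUn : ∀ n, vn n ∉ Un n := fun n => hg2 (Fe n) (Un n)
  have hwv : ∀ n, wn n ≠ vn n := fun n => hg3 (Fe n) (Un n)
  have hTU : ∀ n, Tn n ⊆ Un n := by
    intro n
    induction n with
    | zero => exact subset_rfl
    | succ k ih =>
      rw [hUsucc, hTsucc]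
      split
      · exact ih.trans ((Finset.subset_insert _ _).trans (Finset.subset_insert _ _))
      · exact Finset.insert_subset_insert _ (ih.trans (Finset.subset_insert _ _))
  have hUmono : ∀ m n, m ≤ n → Un m ⊆ Un n := by
    intro m n h
    induction n, h using Nat.le_induction with
    | base => exact subset_rfl
    | succ k hk ih =>
      rw [hUsucc]
      exact ih.trans ((Finset.subset_insert _ _).trans (Finset.subset_insert _ _))
  have hTmono : ∀ m n, m ≤ n → Tn m ⊆ Tn n := by
    intro m n h
    induction n, h using Nat.le_induction with
    | base => exact subset_rfl
    | succ k hk ih =>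
      rw [hTsucc]
      split
      · exact ih
      · exact ih.trans (Finset.subset_insert _ _)
  have hpres : ∀ n k, n ≤ k → ∀ x ∈ Un n, (x ∈ Tn k ↔ x ∈ Tn n) := by
    intro n k h
    induction k, h using Nat.le_induction with
    | base => exact fun x _ => Iff.rfl
    | succ k hk ih =>
      intro x hx
      rw [hTsucc]
      have hxk : x ∈ Un k := hUmono n k hk hx
      split
      · exact ih x hx
      · rw [Finset.mem_insert]
        constructor
        · rintro (h' | h')
          · exact absurd (h' ▸ hxk) (hvUn k)
          · exact (ih x hx).mp h'
        · intro h'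
          exact Or.inr ((ih x hx).mpr h')
  let T : Set V := {x | ∃ n, x ∈ Tn n}
  have hTiff : ∀ n, ∀ x ∈ Un n, (x ∈ T ↔ x ∈ Tn n) := by
    intro n x hx
    constructor
    · rintro ⟨k, hk⟩
      rcases le_total k n with h | h
      · exact hTmono k n h hk
      · exact (hpres n k h x hx).mp hk
    · intro h; exact ⟨n, h⟩
  have hvU1 : ∀ n, vn n ∈ Un (n+1) := by
    intro n; rw [hUsucc]; exact Finset.mem_insert_self _ _
  have hwU1 : ∀ n, wn n ∈ Un (n+1) := by
    intro n; rw [hUsucc]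
    exact Finset.mem_insert_of_mem (Finset.mem_insert_self _ _)
  have hxor : ∀ n, (vn n ∈ T) ↔ ¬(wn n ∈ T) := by
    intro n
    rw [hTiff (n+1) (vn n) (hvU1 n), hTiff (n+1) (wn n) (hwU1 n), hTsucc]
    split
    · rename_i h
      have hv : vn n ∉ Tn n := fun hh => hvUn n (hTU n hh)
      simp [h, hv]
    · rename_i h
      simp [Finset.mem_insert, hwv n, h]
  have horigin : ∀ n, ∀ x ∈ Un n, ∃ m, x = vn m ∨ x = wn m := by
    intro n
    induction n with
    | zero => intro x hx; exact absurd hx (Finset.notMem_empty x)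
    | succ k ih =>
      intro x hx
      rw [hUsucc, Finset.mem_insert, Finset.mem_insert] at hx
      rcases hx with h | h | h
      · exact ⟨k, Or.inl h⟩
      · exact ⟨k, Or.inr h⟩
      · exact ih x h
  -- the countable invariant set O
  let O : Set V := ⋃ n, ((Set.range fun g : ↥H => ev g (vn n)) ∪ (Set.range fun g : ↥H => ev g (wn n)))
  have hOc : O.Countable := Set.countable_iUnion fun n => ((horb (vn n)).union (horb (wn n)))
  have hvO : ∀ n, vn n ∈ O := by
    intro n
    exact Set.mem_iUnion.mpr ⟨n, Or.inl ⟨1, hev1 (vn n)⟩⟩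
  have hwO : ∀ n, wn n ∈ O := by
    intro n
    exact Set.mem_iUnion.mpr ⟨n, Or.inr ⟨1, hev1 (wn n)⟩⟩
  have hTO : T ⊆ O := by
    rintro x ⟨n, hx⟩
    obtain ⟨m, hm | hm⟩ := horigin n x (hTU n hx)
    · exact hm ▸ hvO m
    · exact hm ▸ hwO m
  -- apply the extension property
  have hTcard : #(T : Set V) < κ := lt_of_le_of_lt ((hOc.mono hTO).le_aleph0) hκ
  have hOTcard : #(O \ T : Set V) < κ :=
    lt_of_le_of_lt ((hOc.mono Set.diff_subset).le_aleph0) hκ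
  obtain ⟨x, hxA, hxB⟩ := hext T (O \ T) Set.disjoint_sdiff_right hTcard hOTcard
  have hmem_iff : ∀ z ∈ O, (z ∈ T ↔ G.Adj x z) := by
    intro z hz
    constructor
    · exact hxA z
    · intro h
      by_contra hzT
      exact hxB z ⟨hz, hzT⟩ h
  obtain ⟨n, hn⟩ := hFe (Ffix x)
  have hgfix : ev (gn n) x = x := by
    apply hFfix x (gn n)
    rw [← hn]
    exact hfixn n
  have h1 : G.Adj x (wn n) ↔ G.Adj x (vn n) := by
    have h0 := hevAdj (gn n) x (vn n)
    rw [hgfix] at h0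
    exact h0
  have h2 : vn n ∈ T ↔ wn n ∈ T := by
    rw [hmem_iff (vn n) (hvO n), hmem_iff (wn n) (hwO n), h1]
  rw [hxor n] at h2
  by_cases hw : wn n ∈ T
  · exact h2.mpr hw hw
  · exact hw (h2.mp (fun hh => hw hh))

theorem clique_exists {V : Type u} (κ : Cardinal.{u}) (hκ : Cardinal.aleph0 < κ) (G : SimpleGraph V)
    (hext : ∀ A B : Set V, Disjoint A B → #A < κ → #B < κ →
      ∃ x : V, (∀ y ∈ A, G.Adj x y) ∧ ∀ y ∈ B, ¬ G.Adj x y) :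
    ∃ S : Set V, S.Countable ∧ S.Infinite ∧ G.IsClique S := by
  haveI := Classical.decEq V
  have hstep : ∀ U : Finset V, ∃ x : V, ∀ y ∈ (U : Set V), G.Adj x y := by
    intro U
    obtain ⟨x, hx, -⟩ := hext (↑U) ∅ (by simp) (lt_trans U.finite_toSet.lt_aleph0 hκ)
      (by simpa using lt_trans aleph0_pos hκ)
    exact ⟨x, hx⟩
  choose step hstepA using hstep
  let Fn : ℕ → Finset V := fun n => Nat.rec ∅ (fun _ U => insert (step U) U) n
  let f : ℕ → V := fun n => step (Fn n)
  have hFnsucc : ∀ n, Fn (n+1) = insert (f n) (Fn n) := fun n => rfl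
  have hnotmem : ∀ U : Finset V, step U ∉ U := by
    intro U h
    exact G.irrefl (hstepA U (step U) h)
  have hmem : ∀ m n, m < n → f m ∈ Fn n := by
    intro m n h
    induction n with
    | zero => omega
    | succ k ih =>
      rw [hFnsucc]
      rcases Nat.lt_succ_iff_lt_or_eq.mp h with h' | h'
      · exact Finset.mem_insert_of_mem (ih h')
      · subst h'; exact Finset.mem_insert_self _ _
  have hAdj : ∀ m n, m < n → G.Adj (f n) (f m) := by
    intro m n h
    exact hstepA (Fn n) (f m) (hmem m n h)
  have hinj : Function.Injective f := by
    intro m n h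
    by_contra hne
    rcases Nat.lt_or_ge m n with h' | h'
    · have hh := hmem m n h'
      rw [h] at hh
      exact hnotmem (Fn n) hh
    · have h'' : n < m := by omega
      have hh := hmem n m h''
      rw [← h] at hh
      exact hnotmem (Fn m) hh
  refine ⟨Set.range f, Set.countable_range f, Set.infinite_range_of_injective hinj, ?_⟩
  rintro _ ⟨m, rfl⟩ _ ⟨n, rfl⟩ hne
  rcases lt_trichotomy m n with h | h | h
  · exact (hAdj m n h).symm
  · exact absurd (congrArg f h) hne
  · exact hAdj n m h

open Cardinal in
/-- Let `κ` be an uncountable cardinal and `G` a simple graph such that for every pair of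
disjoint sets of vertices `A, B` of cardinality `< κ` there is a vertex adjacent to every
vertex of `A` and to no vertex of `B` (the random graph of cardinality `κ`). Then `Aut(G)`
is not universal: there is a set `S` of vertices — a countably infinite clique, so that the
automorphism group of the induced subgraph on `S` is topologically isomorphic to `S_∞` —
such that there is no injective continuous group homomorphism from the automorphism group
of the induced subgraph on `S` into `Aut(G)`. -/
theorem randomGraphAut_not_universal
    {V : Type u} (κ : Cardinal.{u}) (hκ : Cardinal.aleph0 < κ) (G : SimpleGraph V)
    (hext : ∀ A B : Set V, Disjoint A B → #A < κ → #B < κ →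
      ∃ x : V, (∀ y ∈ A, G.Adj x y) ∧ ∀ y ∈ B, ¬ G.Adj x y) :
    ∃ S : Set V, S.Countable ∧ S.Infinite ∧ G.IsClique S ∧
      ¬ ∃ e : relAut (SimpleGraph.induce S G).Adj →* relAut G.Adj,
          Function.Injective e ∧ Continuous e := by
  obtain ⟨S, hSc, hSi, hS⟩ := clique_exists κ hκ G hext
  refine ⟨S, hSc, hSi, hS, ?_⟩
  rintro ⟨e, einj, econt⟩
  haveI : Countable ↥S := hSc.to_subtype
  haveI : Infinite ↥S := hSi.to_subtype
  have memD : ∀ g : Equiv.Perm ↥S, g ∈ relAut (SimpleGraph.induce S G).Adj := by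
    intro g a b
    have hiff : ∀ a b : ↥S, (SimpleGraph.induce S G).Adj a b ↔ a ≠ b := by
      intro a b
      constructor
      · intro h
        exact fun hh => (SimpleGraph.irrefl _) (hh ▸ h)
      · intro h
        exact hS a.2 b.2 (fun hh => h (Subtype.ext hh))
    rw [hiff, hiff]
    exact ⟨fun h hh => h (hh ▸ rfl), fun h hh => h (g.injective hh)⟩
  exact key κ hκ G hext (relAut (SimpleGraph.induce S G).Adj) memD e einj econt
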